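/- Let σ(x) = 1/(1 + exp(−x)) be the sigmoid function. Let m be a positive integer and a_1,…,a_m, b_1,…,b_m, c_1,…,c_m real numbers such that |b_i| ≠ |b_j| whenever i ≠ j, and such that a_k·b_k ≠ 0 for some k. Then the function f(x) = Σ_{i=1}^m a_i σ(b_i x + c_i) is not constant on ℝ; that is, there exist x, y ∈ ℝ with f(x) ≠ f(y). -/

import Mathlib

/-- The sigmoid function. -/
noncomputable def sigmoid (x : ℝ) : ℝ := 1 / (1 + Real.exp (-x))


open Filter Topology

lemma exp_lin_tendsto (s t : ℝ) (hs : s < 0) :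
    Tendsto (fun x => Real.exp (s * x + t)) atTop (𝓝 0) := by
  apply Real.tendsto_exp_atBot.comp
  apply tendsto_atBot_add_const_right
  exact (tendsto_const_mul_atBot_of_neg hs).mpr tendsto_id

lemma exp_lin_tendsto' (s t : ℝ) (hs : s ≤ 0) :
    Tendsto (fun x => Real.exp (s * x + t)) atTop
      (𝓝 (if s = 0 then Real.exp t else 0)) := by
  rcases eq_or_lt_of_le hs with h | h
  · subst h
    simp
  · rw [if_neg h.ne]
    exact exp_lin_tendsto s t h

lemma exp_neg_lin_tendsto (b c : ℝ) (hb : 0 < b) :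
    Tendsto (fun x => Real.exp (-(b * x + c))) atTop (𝓝 0) := by
  have h := exp_lin_tendsto (-b) (-c) (by linarith)
  have h2 : (fun x : ℝ => Real.exp (-b * x + -c)) = fun x => Real.exp (-(b * x + c)) := by
    funext x; ring_nf
  rwa [h2] at h

lemma keyPos (a b c β : ℝ) (hb : 0 < b) (hβ : β ≤ b) :
    Tendsto (fun x => a * (sigmoid (b * x + c) - 1) * Real.exp (β * x)) atTop
      (𝓝 (if β = b then -(a * Real.exp (-c)) else 0)) := by
  have hpos : ∀ x : ℝ, (0:ℝ) < 1 + Real.exp (-(b * x + c)) := fun x => by positivity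
  have heq : ∀ x, a * (sigmoid (b * x + c) - 1) * Real.exp (β * x)
      = -a * (Real.exp ((β - b) * x + -c) / (1 + Real.exp (-(b * x + c)))) := by
    intro x
    have e1 : Real.exp ((β - b) * x + -c)
        = Real.exp (β * x) * Real.exp (-(b * x + c)) := by
      rw [← Real.exp_add]; ring_nf
    rw [sigmoid, e1]
    have h0 := (hpos x).ne'
    field_simp
    try ring
    try tauto
  simp only [heq]
  have hden : Tendsto (fun x => 1 + Real.exp (-(b * x + c))) atTop (𝓝 1) := by
    have := (exp_neg_lin_tendsto b c hb).const_add 1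
    simpa using this
  have hnum := exp_lin_tendsto' (β - b) (-c) (by linarith)
  have h := ((hnum.div hden one_ne_zero).const_mul (-a))
  convert h using 2
  swap
  by_cases hh : β = b
  · have : β - b = 0 := by linarith
    simp [hh, this]
  · have : β - b ≠ 0 := sub_ne_zero.mpr hh
    simp [hh, this]
  simp

lemma keyNeg (a b c β : ℝ) (hb : b < 0) (hβ : β ≤ -b) :
    Tendsto (fun x => a * sigmoid (b * x + c) * Real.exp (β * x)) atTop
      (𝓝 (if β = -b then a * Real.exp c else 0)) := by
  have hpos : ∀ x : ℝ, (0:ℝ) < Real.exp (b * x + c) + 1 := fun x => by positivity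
  have heq : ∀ x, a * sigmoid (b * x + c) * Real.exp (β * x)
      = a * (Real.exp ((b + β) * x + c) / (Real.exp (b * x + c) + 1)) := by
    intro x
    have e1 : Real.exp ((b + β) * x + c)
        = Real.exp (b * x + c) * Real.exp (β * x) := by
      rw [← Real.exp_add]; ring_nf
    have e2 : sigmoid (b * x + c)
        = Real.exp (b * x + c) / (Real.exp (b * x + c) + 1) := by
      rw [sigmoid, Real.exp_neg]
      have := (Real.exp_pos (b * x + c)).ne'
      field_simp
    rw [e2, e1]
    have := (hpos x).ne'
    field_simp
  simp only [heq]
  have hden : Tendsto (fun x => Real.exp (b * x + c) + 1) atTop (𝓝 1) := by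
    have := (exp_lin_tendsto b c hb).add_const 1
    simpa using this
  have hnum := exp_lin_tendsto' (b + β) c (by linarith)
  have h := ((hnum.div hden one_ne_zero).const_mul a)
  convert h using 2
  swap
  by_cases hh : β = -b
  · have : b + β = 0 := by linarith
    simp [hh, this]
  · have : b + β ≠ 0 := by intro h2; apply hh; linarith
    simp [hh, this]
  simp

lemma sigPos' (b c : ℝ) (hb : 0 < b) :
    Tendsto (fun x => sigmoid (b * x + c)) atTop (𝓝 1) := by
  have hden : Tendsto (fun x => 1 + Real.exp (-(b * x + c))) atTop (𝓝 1) := by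
    have := (exp_neg_lin_tendsto b c hb).const_add 1
    simpa using this
  have h := hden.inv₀ one_ne_zero
  simp only [sigmoid, one_div]
  simpa using h

lemma sigNeg' (b c : ℝ) (hb : b < 0) :
    Tendsto (fun x => sigmoid (b * x + c)) atTop (𝓝 0) := by
  have h := keyNeg 1 b c 0 hb (by linarith)
  have h0 : (0:ℝ) ≠ -b := by intro hh; linarith
  simpa [h0] using h


/-- A nontrivial finite linear combination of sigmoids with slopes of pairwise
distinct absolute values is not a constant function. -/
theorem stmt_4 (m : ℕ) (hm : 0 < m) (a b c : Fin m → ℝ)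
    (hb : ∀ i j, i ≠ j → |b i| ≠ |b j|)
    (hk : ∃ k, a k * b k ≠ 0) :
    ∃ x y : ℝ,
      (∑ i, a i * sigmoid (b i * x + c i)) ≠ (∑ i, a i * sigmoid (b i * y + c i)) := by
  by_contra hcon
  push_neg at hcon
  obtain ⟨k0, hk0⟩ := hk
  have hak0 : a k0 ≠ 0 := fun h => hk0 (by simp [h])
  have hbk0 : b k0 ≠ 0 := fun h => hk0 (by simp [h])
  set S : Finset (Fin m) := Finset.univ.filter (fun i => a i ≠ 0 ∧ b i ≠ 0) with hS
  have hk0S : k0 ∈ S := by simp [hS, hak0, hbk0]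
  obtain ⟨k, hkS, hmin⟩ := S.exists_min_image (fun i => |b i|) ⟨k0, hk0S⟩
  have hak : a k ≠ 0 := ((Finset.mem_filter.mp hkS).2).1
  have hbk : b k ≠ 0 := ((Finset.mem_filter.mp hkS).2).2
  set β := |b k| with hβdef
  have hβpos : 0 < β := abs_pos.mpr hbk
  set ℓ : Fin m → ℝ :=
    fun i => if 0 < b i then a i else if b i = 0 then a i * sigmoid (c i) else 0 with hℓ
  have hlim1 : ∀ i : Fin m,
      Tendsto (fun x => a i * sigmoid (b i * x + c i)) atTop (𝓝 (ℓ i)) := by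
    intro i
    rcases lt_trichotomy (b i) 0 with h | h | h
    · have := (sigNeg' (b i) (c i) h).const_mul (a i)
      simpa [hℓ, not_lt.mpr h.le, h.ne] using this
    · have he : (fun x : ℝ => a i * sigmoid (b i * x + c i))
          = fun _ => a i * sigmoid (c i) := by
        funext x; rw [h, zero_mul, zero_add]
      rw [he]
      simpa [hℓ, h] using tendsto_const_nhds (α := ℝ) (f := atTop)
        (a := a i * sigmoid (c i))
    · have := (sigPos' (b i) (c i) h).const_mul (a i)
      simpa [hℓ, h] using this
  have hsum1 : Tendsto (fun x => ∑ i, a i * sigmoid (b i * x + c i)) atTop (𝓝 (∑ i, ℓ i)) :=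
    tendsto_finset_sum _ (fun i _ => hlim1 i)
  have hC : (∑ i, a i * sigmoid (b i * 0 + c i)) = ∑ i, ℓ i := by
    have hconst : Tendsto (fun x : ℝ => ∑ i, a i * sigmoid (b i * x + c i)) atTop
        (𝓝 (∑ i, a i * sigmoid (b i * 0 + c i))) := by
      have he : (fun x : ℝ => ∑ i, a i * sigmoid (b i * x + c i))
          = fun _ => ∑ i, a i * sigmoid (b i * 0 + c i) := by
        funext x; exact hcon x 0
      rw [he]; exact tendsto_const_nhds
    exact tendsto_nhds_unique hconst hsum1
  set r : Fin m → ℝ := fun i => if i = k then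
      (if 0 < b k then -(a k * Real.exp (-(c k))) else a k * Real.exp (c k)) else 0 with hr
  have hterm : ∀ i : Fin m,
      Tendsto (fun x => (a i * sigmoid (b i * x + c i) - ℓ i) * Real.exp (β * x))
        atTop (𝓝 (r i)) := by
    intro i
    by_cases hik : i = k
    · subst hik
      rcases hbk.lt_or_gt with h | h
      · have hℓi : ℓ i = 0 := by simp [hℓ, not_lt.mpr h.le, h.ne]
        have hβb : β = -(b i) := abs_of_neg h
        have hkey := keyNeg (a i) (b i) (c i) β h (le_of_eq hβb)
        have hri : r i = a i * Real.exp (c i) := by simp [hr, not_lt.mpr h.le]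
        rw [hri, hℓi]
        simpa [hβb] using hkey
      · have hℓi : ℓ i = a i := by simp [hℓ, h]
        have hβb : β = b i := abs_of_pos h
        have hkey := keyPos (a i) (b i) (c i) β h (le_of_eq hβb)
        have hri : r i = -(a i * Real.exp (-(c i))) := by simp [hr, h]
        have he : (fun x => (a i * sigmoid (b i * x + c i) - a i) * Real.exp (β * x))
            = fun x => a i * (sigmoid (b i * x + c i) - 1) * Real.exp (β * x) := by
          funext x; ring
        rw [hri, hℓi, he]
        simpa [hβb] using hkey
    · have hri : r i = 0 := by simp [hr, hik]
      rw [hri]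
      by_cases hai : a i = 0
      · have he : (fun x => (a i * sigmoid (b i * x + c i) - ℓ i) * Real.exp (β * x))
            = fun _ => (0:ℝ) := by
          funext x
          have hℓi : ℓ i = 0 := by simp [hℓ, hai]
          simp [hai, hℓi]
        rw [he]; exact tendsto_const_nhds
      · rcases lt_trichotomy (b i) 0 with h | h | h
        · have hℓi : ℓ i = 0 := by simp [hℓ, not_lt.mpr h.le, h.ne]
          have hiS : i ∈ S := by simp [hS, hai, h.ne]
          have hne : β ≠ -(b i) := by
            rw [← abs_of_neg h]; exact hb k i (fun hh => hik hh.symm)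
          have hkey := keyNeg (a i) (b i) (c i) β h (by
            have := hmin i hiS
            rwa [abs_of_neg h] at this)
          rw [hℓi]
          simpa [hne] using hkey
        · have he : (fun x => (a i * sigmoid (b i * x + c i) - ℓ i) * Real.exp (β * x))
              = fun _ => (0:ℝ) := by
            funext x
            have hℓi : ℓ i = a i * sigmoid (c i) := by simp [hℓ, h]
            rw [hℓi, h, zero_mul, zero_add, sub_self, zero_mul]
          rw [he]; exact tendsto_const_nhds
        · have hℓi : ℓ i = a i := by simp [hℓ, h]
          have hiS : i ∈ S := by simp [hS, hai, h.ne']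
          have hlt : β ≤ |b i| := hmin i hiS
          have hne : β ≠ b i := by
            rw [← abs_of_pos h]; exact hb k i (fun hh => hik hh.symm)
          have hkey := keyPos (a i) (b i) (c i) β h (by rwa [← abs_of_pos h])
          have he : (fun x => (a i * sigmoid (b i * x + c i) - a i) * Real.exp (β * x))
              = fun x => a i * (sigmoid (b i * x + c i) - 1) * Real.exp (β * x) := by
            funext x; ring
          rw [hℓi, he]
          simpa [hne] using hkey
  have hsum2 : Tendsto (fun x => ∑ i, (a i * sigmoid (b i * x + c i) - ℓ i) * Real.exp (β * x))
      atTop (𝓝 (∑ i, r i)) := tendsto_finset_sum _ (fun i _ => hterm i)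
  have hzero : (fun x => ∑ i, (a i * sigmoid (b i * x + c i) - ℓ i) * Real.exp (β * x))
      = fun _ => (0:ℝ) := by
    funext x
    rw [← Finset.sum_mul, Finset.sum_sub_distrib, hcon x 0, hC, sub_self, zero_mul]
  rw [hzero] at hsum2
  have hsum0 : (∑ i, r i) = 0 := tendsto_nhds_unique hsum2 tendsto_const_nhds
  have hrk : r k = 0 := by
    rw [Finset.sum_eq_single k (fun i _ hik => by simp [hr, hik]) (by simp)] at hsum0
    exact hsum0
  rw [hr] at hrk
  simp only [if_pos rfl] at hrk
  rcases lt_or_gt_of_ne hbk with h | h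
  · rw [if_neg (not_lt.mpr h.le)] at hrk
    exact hak ((mul_eq_zero.mp hrk).resolve_right (Real.exp_ne_zero _))
  · rw [if_pos h] at hrk
    exact hak ((mul_eq_zero.mp (neg_eq_zero.mp hrk)).resolve_right (Real.exp_ne_zero _))
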